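/- Let R be a commutative ring, q, m, r ∈ R, A an associative unital R-algebra, and a, b ∈ A satisfying the q-commutation relation a*b - q•(b*a) = 1. Then for every natural number n, the normal-ordering expansion holds: (m•(b*a) + r•1)^n = \sum_{k=0}^{n} (m^k * W_{m,r,q}(n,k)) • (b^k * a^k). -/

import Mathlib

/-- The q-integer [n]_q. -/
def qInt {R : Type*} [CommRing R] (q : R) (n : ℕ) : R :=
  ∑ i ∈ Finset.range n, q ^ i


/-- The (q,r)-Whitney numbers of the second kind. -/
def qWhitney {R : Type*} [CommRing R] (q m r : R) : ℕ → ℕ → R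
  | 0, 0 => 1
  | 0, _ + 1 => 0
  | n + 1, 0 => r * qWhitney q m r n 0
  | n + 1, k + 1 =>
      q ^ k * qWhitney q m r n k + (m * qInt q (k + 1) + r) * qWhitney q m r n (k + 1)

lemma qWhitney_eq_zero {R : Type*} [CommRing R] (q m r : R) :
    ∀ n k : ℕ, n < k → qWhitney q m r n k = 0 := by
  intro n
  induction n with
  | zero => intro k hk; match k, hk with
    | k + 1, _ => rfl
  | succ n ih =>
    intro k hk
    match k, hk with
    | k + 1, hk =>
      have h1 : n < k := Nat.lt_of_succ_lt_succ hk
      rw [qWhitney, ih k h1, ih (k+1) (Nat.lt_succ_of_lt h1)]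
      ring

lemma qInt_succ {R : Type*} [CommRing R] (q : R) (k : ℕ) :
    qInt q (k + 1) = qInt q k + q ^ k := by
  simp [qInt, Finset.sum_range_succ]

lemma qBoson_aux {R : Type*} [CommRing R] (q : R) {A : Type*}
    [Ring A] [Algebra R A] (a b : A) (h : a * b - q • (b * a) = 1) :
    ∀ k : ℕ, a * b ^ (k + 1) =
      q ^ (k + 1) • (b ^ (k + 1) * a) + qInt q (k + 1) • b ^ k := by
  have hab : a * b = q • (b * a) + 1 := sub_eq_iff_eq_add'.mp h
  intro k
  induction k with
  | zero =>
    simpa [qInt] using hab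
  | succ k ih =>
    have h2 : a * b ^ (k + 2) = (a * b ^ (k + 1)) * b := by
      rw [mul_assoc, ← pow_succ]
    have hb : b ^ (k + 1) * (b * a) = b ^ (k + 2) * a := by
      rw [← mul_assoc, ← pow_succ]
    rw [h2, ih, add_mul, smul_mul_assoc, smul_mul_assoc, mul_assoc, hab,
      mul_add, mul_one, smul_add, mul_smul_comm, hb, smul_smul,
      ← pow_succ, ← pow_succ, qInt_succ q (k + 1)]
    module

lemma qBoson_step {R : Type*} [CommRing R] (q : R) {A : Type*}
    [Ring A] [Algebra R A] (a b : A) (h : a * b - q • (b * a) = 1) (k : ℕ) :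
    (b * a) * (b ^ k * a ^ k) =
      q ^ k • (b ^ (k + 1) * a ^ (k + 1)) + qInt q k • (b ^ k * a ^ k) := by
  cases k with
  | zero => simp [qInt]
  | succ k =>
    have h2 : (b * a) * (b ^ (k+1) * a ^ (k+1)) = b * (a * b ^ (k+1)) * a ^ (k+1) := by
      rw [mul_assoc b a, ← mul_assoc a, ← mul_assoc]
    have hb : b * (b ^ (k+1) * a) * a ^ (k+1) = b ^ (k+1+1) * a ^ (k+1+1) := by
      rw [← mul_assoc, ← pow_succ', mul_assoc, ← pow_succ']
    have hc : b * b ^ k * a ^ (k+1) = b ^ (k+1) * a ^ (k+1) := by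
      rw [← pow_succ']
    rw [h2, qBoson_aux q a b h k, mul_add, mul_smul_comm, mul_smul_comm,
      add_mul, smul_mul_assoc, smul_mul_assoc, hb, hc]

/-- Normal-ordering expansion of (m b a + r)^n via (q,r)-Whitney numbers. -/
theorem qBoson_whitney_normal_order {R : Type*} [CommRing R] (q m r : R) {A : Type*}
    [Ring A] [Algebra R A] (a b : A) (h : a * b - q • (b * a) = 1) (n : ℕ) :
    (m • (b * a) + r • (1 : A)) ^ n =
      ∑ k ∈ Finset.range (n + 1), (m ^ k * qWhitney q m r n k) • (b ^ k * a ^ k) := by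
  induction n with
  | zero => simp [qWhitney]
  | succ n ih =>
    rw [pow_succ', ih, Finset.mul_sum]
    have hX : ∀ k : ℕ, (m • (b * a) + r • (1 : A)) *
        ((m ^ k * qWhitney q m r n k) • (b ^ k * a ^ k)) =
        (m ^ (k+1) * q ^ k * qWhitney q m r n k) • (b ^ (k+1) * a ^ (k+1)) +
        (m ^ k * (m * qInt q k + r) * qWhitney q m r n k) • (b ^ k * a ^ k) := by
      intro k
      rw [mul_smul_comm, add_mul, smul_mul_assoc, smul_mul_assoc, one_mul,
        qBoson_step q a b h k]
      module
    simp only [hX]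
    rw [Finset.sum_add_distrib]
    -- second sum: peel off the k = 0 term
    rw [Finset.sum_range_succ' (fun k => (m ^ k * (m * qInt q k + r) * qWhitney q m r n k) •
      (b ^ k * a ^ k))]
    -- RHS: peel off the k = 0 term
    rw [Finset.sum_range_succ' (fun k => (m ^ k * qWhitney q m r (n+1) k) • (b ^ k * a ^ k))]
    have h0 : (m ^ 0 * (m * qInt q 0 + r) * qWhitney q m r n 0) • (b ^ 0 * a ^ 0) =
        (m ^ 0 * qWhitney q m r (n+1) 0) • ((b:A) ^ 0 * a ^ 0) := by
      simp [qWhitney, qInt]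
    rw [h0]
    -- extend the shifted second sum from range n to range (n+1) using vanishing term
    have hext : ∑ k ∈ Finset.range n,
        (m ^ (k+1) * (m * qInt q (k+1) + r) * qWhitney q m r n (k+1)) • (b ^ (k+1) * a ^ (k+1)) =
        ∑ k ∈ Finset.range (n+1),
        (m ^ (k+1) * (m * qInt q (k+1) + r) * qWhitney q m r n (k+1)) • (b ^ (k+1) * a ^ (k+1)) := by
      rw [Finset.sum_range_succ, qWhitney_eq_zero q m r n (n+1) (Nat.lt_succ_self n)]
      simp
    rw [hext, ← add_assoc, ← Finset.sum_add_distrib]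
    congr 1
    apply Finset.sum_congr rfl
    intro k _
    rw [← add_smul]
    congr 1
    show _ = m ^ (k+1) * qWhitney q m r (n+1) (k+1)
    rw [qWhitney]
    ring
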